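/- Let Δ̃ and Δ̃* be complex Hilbert spaces and let U10 = [[A10,B10],[C10,0]] : H10 ⊕ Δ̃ → H10 ⊕ Δ̃* be the explicit colligation on H10 = ℓ²(ℕ, Δ̃) ⊕ ℓ²(ℕ, Δ̃*) with A10(x,y) = (Sx, S*y), B10 δ = (δ·e0, 0), C10(x,y) = y(0) (S the unilateral forward shift, S* the backward shift). Then U10 is, up to unitary equivalence, the unique simple unitary colligation with input space Δ̃, output space Δ̃* and zero characteristic function: if U = [[A,B],[C,D]] : H ⊕ Δ̃ → H ⊕ Δ̃* is any simple unitary colligation with D = 0 and C Aⁿ B = 0 for all n ≥ 0, then there exists a unitary operator τ : H → H10 with τ∘A = A10∘τ, τ∘B = B10, and C = C10∘τ. -/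

import Mathlib

open ContinuousLinearMap

/-- The state space `H10 = ℓ²(ℕ, Δ̃) ⊕₂ ℓ²(ℕ, Δ̃*)` of the simple unitary colligation with
zero characteristic function. -/
noncomputable abbrev H10 (Δ Δs : Type*) [NormedAddCommGroup Δ] [NormedAddCommGroup Δs] :
    Type _ :=
  WithLp 2 ((lp (fun _ : ℕ => Δ) 2) × (lp (fun _ : ℕ => Δs) 2))

open scoped ComplexInnerProductSpace ENNReal

noncomputable def bsl {E : Type*} [NormedAddCommGroup E]
    (x : lp (fun _ : ℕ => E) 2) : lp (fun _ : ℕ => E) 2 :=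
  ⟨fun n => x (n + 1), by
    apply memℓp_gen
    have hx : Summable fun n => ‖x n‖ ^ (2 : ℝ≥0∞).toReal :=
      (memℓp_gen_iff (by norm_num)).mp (lp.memℓp x)
    exact hx.comp_injective (add_left_injective 1)⟩

noncomputable def fsl {E : Type*} [NormedAddCommGroup E]
    (y : lp (fun _ : ℕ => E) 2) : lp (fun _ : ℕ => E) 2 :=
  ⟨fun n => Nat.casesOn n 0 (fun k => y k), by
    apply memℓp_gen
    apply (summable_nat_add_iff 1).mp
    have hy : Summable fun n => ‖y n‖ ^ (2 : ℝ≥0∞).toReal :=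
      (memℓp_gen_iff (by norm_num)).mp (lp.memℓp y)
    exact hy⟩

@[simp] lemma bsl_apply {E : Type*} [NormedAddCommGroup E]
    (x : lp (fun _ : ℕ => E) 2) (n : ℕ) : bsl x n = x (n + 1) := rfl

@[simp] lemma fsl_zero {E : Type*} [NormedAddCommGroup E]
    (y : lp (fun _ : ℕ => E) 2) : fsl y 0 = 0 := rfl

@[simp] lemma fsl_succ {E : Type*} [NormedAddCommGroup E]
    (y : lp (fun _ : ℕ => E) 2) (n : ℕ) : fsl y (n + 1) = y n := rfl

set_option maxHeartbeats 1600000 in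
/-- **Uniqueness (up to unitary equivalence) of the simple unitary colligation with zero
characteristic function.**  If `U = [[A,B],[C,Dz]] : H ⊕ Δ̃ → H ⊕ Δ̃*` is any simple unitary
colligation with `Dz = 0` and `C Aⁿ B = 0` for all `n ≥ 0`, then `U` is unitarily
equivalent to the explicit colligation `U10 = [[A10,B10],[C10,0]]` on
`H10 = ℓ²(ℕ,Δ̃) ⊕₂ ℓ²(ℕ,Δ̃*)` with `A10(x,y) = (Sx, S*y)`, `B10 δ = (δ·e₀,0)`,
`C10(x,y) = y(0)`. -/
theorem stmt_14 {Δ Δs H : Type*}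
    [NormedAddCommGroup Δ] [InnerProductSpace ℂ Δ] [CompleteSpace Δ]
    [NormedAddCommGroup Δs] [InnerProductSpace ℂ Δs] [CompleteSpace Δs]
    [NormedAddCommGroup H] [InnerProductSpace ℂ H] [CompleteSpace H]
    -- the explicit colligation `U10` on `H10`
    (A10 : H10 Δ Δs →L[ℂ] H10 Δ Δs)
    (hA10 : ∀ p : H10 Δ Δs,
      ((WithLp.equiv 2 _ (A10 p)).1) 0 = 0 ∧
      (∀ n : ℕ, ((WithLp.equiv 2 _ (A10 p)).1) (n + 1) = ((WithLp.equiv 2 _ p).1) n) ∧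
      (∀ n : ℕ, ((WithLp.equiv 2 _ (A10 p)).2) n = ((WithLp.equiv 2 _ p).2) (n + 1)))
    (B10 : Δ →L[ℂ] H10 Δ Δs)
    (hB10 : ∀ δ : Δ, WithLp.equiv 2 _ (B10 δ) = (lp.single 2 0 δ, 0))
    (C10 : H10 Δ Δs →L[ℂ] Δs)
    (hC10 : ∀ p : H10 Δ Δs, C10 p = ((WithLp.equiv 2 _ p).2) 0)
    -- an arbitrary simple unitary colligation `U = [[A,B],[C,Dz]] : H ⊕ Δ̃ → H ⊕ Δ̃*`
    (A : H →L[ℂ] H) (B : Δ →L[ℂ] H) (C : H →L[ℂ] Δs) (Dz : Δ →L[ℂ] Δs)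
    (hiso : ∀ (x : H) (e : Δ),
        ‖A x + B e‖ ^ 2 + ‖C x + Dz e‖ ^ 2 = ‖x‖ ^ 2 + ‖e‖ ^ 2)
    (hsurj : ∀ (y : H) (ε : Δs), ∃ (x : H) (e : Δ), A x + B e = y ∧ C x + Dz e = ε)
    (hsimple : ∀ T : Submodule ℂ H, IsClosed (T : Set H) →
        (∀ e : Δ, B e ∈ T) →
        (∀ ε : Δs, adjoint C ε ∈ T) →
        (∀ x ∈ T, A x ∈ T) →
        (∀ x ∈ T, adjoint A x ∈ T) →
        T = ⊤)
    (hDz : Dz = 0)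
    (hchar : ∀ n : ℕ, C.comp ((A ^ n).comp B) = 0) :
    ∃ τ : H ≃ₗᵢ[ℂ] H10 Δ Δs,
      (∀ x : H, τ (A x) = A10 (τ x)) ∧
      (∀ e : Δ, τ (B e) = B10 e) ∧
      (∀ x : H, C x = C10 (τ x)) := by
  subst hDz
  obtain ⟨Ue, hUe⟩ : ∃ Ue : WithLp 2 (H × Δ) ≃ₗᵢ[ℂ] WithLp 2 (H × Δs),
      ∀ (x : H) (e : Δ), Ue ((WithLp.equiv 2 (H × Δ)).symm (x, e)) =
        (WithLp.equiv 2 (H × Δs)).symm (A x + B e, C x) := by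
    set L : WithLp 2 (H × Δ) →ₗ[ℂ] WithLp 2 (H × Δs) :=
      (WithLp.linearEquiv 2 ℂ (H × Δs)).symm.toLinearMap ∘ₗ
        (((A : H →ₗ[ℂ] H) ∘ₗ LinearMap.fst ℂ H Δ +
          (B : Δ →ₗ[ℂ] H) ∘ₗ LinearMap.snd ℂ H Δ).prod
          ((C : H →ₗ[ℂ] Δs) ∘ₗ LinearMap.fst ℂ H Δ)) ∘ₗ
        (WithLp.linearEquiv 2 ℂ (H × Δ)).toLinearMap with hL
    have hLapp : ∀ (x : H) (e : Δ), L ((WithLp.equiv 2 (H × Δ)).symm (x, e)) =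
        (WithLp.equiv 2 (H × Δs)).symm (A x + B e, C x) := fun x e => rfl
    have hfst : ∀ p : WithLp 2 (H × Δ), (L p).fst = A p.fst + B p.snd := fun p => rfl
    have hsnd : ∀ p : WithLp 2 (H × Δ), (L p).snd = C p.fst := fun p => rfl
    have hnorm : ∀ p : WithLp 2 (H × Δ), ‖L p‖ = ‖p‖ := by
      intro p
      have h2 : ‖L p‖ ^ 2 = ‖p‖ ^ 2 := by
        rw [WithLp.prod_norm_sq_eq_of_L2, WithLp.prod_norm_sq_eq_of_L2, hfst, hsnd]
        simpa using hiso p.fst p.snd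
      exact (pow_left_inj₀ (norm_nonneg _) (norm_nonneg _) (two_ne_zero)).mp h2
    have hsurjL : Function.Surjective L := by
      intro q
      obtain ⟨x, e, h1, h2⟩ := hsurj q.fst q.snd
      refine ⟨(WithLp.equiv 2 (H × Δ)).symm (x, e), ?_⟩
      rw [hLapp, Equiv.symm_apply_eq]
      have h1' : A x + B e = (WithLp.equiv 2 (H × Δs) q).1 := h1
      have h2' : C x = (WithLp.equiv 2 (H × Δs) q).2 := by simpa using h2
      exact Prod.ext h1' h2'
    exact ⟨LinearIsometryEquiv.ofSurjective ⟨L, hnorm⟩ hsurjL,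
      fun x e => by rw [LinearIsometryEquiv.coe_ofSurjective]; exact hLapp x e⟩
  -- inner identities
  have I1 : ∀ x y : H, ⟪A x, A y⟫ + ⟪C x, C y⟫ = ⟪x, y⟫ := by
    intro x y
    have h := Ue.inner_map_map ((WithLp.equiv 2 (H × Δ)).symm (x, 0))
      ((WithLp.equiv 2 (H × Δ)).symm (y, 0))
    rw [hUe, hUe] at h
    simpa [WithLp.prod_inner_apply, WithLp.toLp_fst, WithLp.toLp_snd] using h
  have I2 : ∀ (x : H) (e : Δ), ⟪A x, B e⟫ = 0 := by
    intro x e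
    have h := Ue.inner_map_map ((WithLp.equiv 2 (H × Δ)).symm (x, 0))
      ((WithLp.equiv 2 (H × Δ)).symm (0, e))
    rw [hUe, hUe] at h
    simpa [WithLp.prod_inner_apply, WithLp.toLp_fst, WithLp.toLp_snd] using h
  have I3 : ∀ e f : Δ, ⟪B e, B f⟫ = ⟪e, f⟫ := by
    intro e f
    have h := Ue.inner_map_map ((WithLp.equiv 2 (H × Δ)).symm (0, e))
      ((WithLp.equiv 2 (H × Δ)).symm (0, f))
    rw [hUe, hUe] at h
    simpa [WithLp.prod_inner_apply, WithLp.toLp_fst, WithLp.toLp_snd] using h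
  have hUes : ∀ (y : H) (ε : Δs), Ue.symm ((WithLp.equiv 2 (H × Δs)).symm (y, ε)) =
      (WithLp.equiv 2 (H × Δ)).symm (adjoint A y + adjoint C ε, adjoint B y) := by
    intro y ε
    apply ext_inner_left ℂ
    intro v
    have h1 : ∀ Q, ⟪v, Ue.symm Q⟫ = ⟪Ue v, Q⟫ := fun Q => by
      conv_rhs => rw [← Ue.apply_symm_apply Q]
      exact (Ue.inner_map_map v (Ue.symm Q)).symm
    rw [h1]
    have hv : v = (WithLp.equiv 2 (H × Δ)).symm (v.fst, v.snd) := rfl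
    rw [hv, hUe v.fst v.snd]
    simp only [WithLp.prod_inner_apply, WithLp.equiv_symm_apply, WithLp.ofLp_toLp,
      inner_add_left, inner_add_right, adjoint_inner_right]
    ring
  have I4 : ∀ x y : H, ⟪adjoint A x, adjoint A y⟫ + ⟪adjoint B x, adjoint B y⟫
      = ⟪x, y⟫ := by
    intro x y
    have h := Ue.symm.inner_map_map ((WithLp.equiv 2 (H × Δs)).symm (x, 0))
      ((WithLp.equiv 2 (H × Δs)).symm (y, 0))
    rw [hUes, hUes] at h
    simpa [WithLp.prod_inner_apply, WithLp.toLp_fst, WithLp.toLp_snd] using h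
  have I5 : ∀ (x : H) (ε : Δs), ⟪adjoint A x, adjoint C ε⟫ = 0 := by
    intro x ε
    have h := Ue.symm.inner_map_map ((WithLp.equiv 2 (H × Δs)).symm (x, 0))
      ((WithLp.equiv 2 (H × Δs)).symm (0, ε))
    rw [hUes, hUes] at h
    simpa [WithLp.prod_inner_apply, WithLp.toLp_fst, WithLp.toLp_snd] using h
  have I6 : ∀ ε ε' : Δs, ⟪adjoint C ε, adjoint C ε'⟫ = ⟪ε, ε'⟫ := by
    intro ε ε'
    have h := Ue.symm.inner_map_map ((WithLp.equiv 2 (H × Δs)).symm (0, ε))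
      ((WithLp.equiv 2 (H × Δs)).symm (0, ε'))
    rw [hUes, hUes] at h
    simpa [WithLp.prod_inner_apply, WithLp.toLp_fst, WithLp.toLp_snd] using h
  -- power application lemmas
  have hpow1 : ∀ (T : H →L[ℂ] H) (n : ℕ) (v : H), (T ^ (n + 1)) v = T ((T ^ n) v) := by
    intro T n v; rw [pow_succ']; rfl
  have hpow2 : ∀ (T : H →L[ℂ] H) (n : ℕ) (v : H), (T ^ (n + 1)) v = (T ^ n) (T v) := by
    intro T n v; rw [pow_succ]; rfl
  have hpow0 : ∀ (T : H →L[ℂ] H) (v : H), (T ^ 0) v = v := by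
    intro T v; rw [pow_zero]; rfl
  have hpowadd : ∀ (T : H →L[ℂ] H) (m n : ℕ) (v : H),
      (T ^ m) ((T ^ n) v) = (T ^ (m + n)) v := by
    intro T m n v; rw [pow_add]; rfl
  have hCpow : ∀ (n : ℕ) (e : Δ), C ((A ^ n) (B e)) = 0 := by
    intro n e
    have h := DFunLike.congr_fun (hchar n) e
    simpa using h
  have adj_pow : ∀ (n : ℕ) (v w : H), ⟪v, ((adjoint A) ^ n) w⟫ = ⟪(A ^ n) v, w⟫ := by
    intro n
    induction n with
    | zero => intro v w; rw [hpow0, hpow0]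
    | succ k ih =>
      intro v w
      rw [hpow2 (adjoint A) k w, ih v (adjoint A w), adjoint_inner_right, ← hpow1 A k v]
  -- orthogonality relations
  have L1 : ∀ (n m : ℕ) (e f : Δ),
      ⟪(A ^ n) (B e), (A ^ m) (B f)⟫ = if n = m then ⟪e, f⟫ else 0 := by
    intro n
    induction n with
    | zero =>
      intro m e f
      cases m with
      | zero => simpa [hpow0] using I3 e f
      | succ k =>
        rw [if_neg (by omega), hpow0, hpow1]
        rw [inner_eq_zero_symm]
        exact I2 ((A ^ k) (B f)) e
    | succ n ih =>
      intro m e f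
      cases m with
      | zero =>
        rw [if_neg (by omega), hpow0, hpow1]
        exact I2 ((A ^ n) (B e)) f
      | succ k =>
        rw [hpow1, hpow1]
        have h := I1 ((A ^ n) (B e)) ((A ^ k) (B f))
        rw [hCpow n e, inner_zero_left, add_zero] at h
        rw [h, ih k e f]
        simp [Nat.succ_inj]
  have hBdpow : ∀ (n : ℕ) (ε : Δs),
      adjoint B (((adjoint A) ^ n) (adjoint C ε)) = 0 := by
    intro n ε
    apply ext_inner_right ℂ
    intro v
    rw [adjoint_inner_left, ← inner_conj_symm, adj_pow, adjoint_inner_right, hCpow,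
      inner_zero_left, inner_zero_left, map_zero]
  have L2 : ∀ (n m : ℕ) (ε ε' : Δs),
      ⟪((adjoint A) ^ n) (adjoint C ε), ((adjoint A) ^ m) (adjoint C ε')⟫
        = if n = m then ⟪ε, ε'⟫ else 0 := by
    intro n
    induction n with
    | zero =>
      intro m ε ε'
      cases m with
      | zero => simpa [hpow0] using I6 ε ε'
      | succ k =>
        rw [if_neg (by omega), hpow0, hpow1, inner_eq_zero_symm]
        exact I5 (((adjoint A) ^ k) (adjoint C ε')) ε
    | succ n ih =>
      intro m ε ε'
      cases m with
      | zero =>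
        rw [if_neg (by omega), hpow0, hpow1]
        exact I5 (((adjoint A) ^ n) (adjoint C ε)) ε'
      | succ k =>
        rw [hpow1, hpow1]
        have h := I4 (((adjoint A) ^ n) (adjoint C ε)) (((adjoint A) ^ k) (adjoint C ε'))
        rw [hBdpow n ε, inner_zero_left, add_zero] at h
        rw [h, ih k ε ε']
        simp [Nat.succ_inj]
  have L3 : ∀ (n m : ℕ) (e : Δ) (ε : Δs),
      ⟪(A ^ n) (B e), ((adjoint A) ^ m) (adjoint C ε)⟫ = 0 := by
    intro n m e ε
    rw [adj_pow m ((A ^ n) (B e)) (adjoint C ε),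
      adjoint_inner_right C ((A ^ m) ((A ^ n) (B e))) ε,
      hpowadd A m n (B e), hCpow (m + n) e, inner_zero_left]
  -- vector identities
  have hAB0 : ∀ e : Δ, adjoint A (B e) = 0 := by
    intro e
    apply ext_inner_left ℂ
    intro v
    rw [adjoint_inner_right, I2, inner_zero_right]
  have hAdA : ∀ v : H, C v = 0 → adjoint A (A v) = v := by
    intro v hv
    apply ext_inner_left ℂ
    intro w
    rw [adjoint_inner_right]
    have h := I1 w v
    rw [hv, inner_zero_right, add_zero] at h
    exact h
  have hACd0 : ∀ ε : Δs, A (adjoint C ε) = 0 := by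
    intro ε
    apply ext_inner_left ℂ
    intro v
    rw [← adjoint_inner_left, I5, inner_zero_right]
  have hAAd : ∀ v : H, adjoint B v = 0 → A (adjoint A v) = v := by
    intro v hv
    apply ext_inner_left ℂ
    intro w
    rw [← adjoint_inner_left]
    have h := I4 w v
    rw [hv, inner_zero_right, add_zero] at h
    exact h
  have hCCd : ∀ ε : Δs, C (adjoint C ε) = ε := by
    intro ε
    apply ext_inner_left ℂ
    intro ζ
    rw [← adjoint_inner_left, I6]
  have hCAd : ∀ (n : ℕ) (ε : Δs), C (((adjoint A) ^ (n + 1)) (adjoint C ε)) = 0 := by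
    intro n ε
    apply ext_inner_left ℂ
    intro ζ
    rw [← adjoint_inner_left]
    have h := L2 0 (n + 1) ζ ε
    rw [if_neg (by omega), hpow0] at h
    rw [h, inner_zero_right]
  -- the isometries V₁ n = Aⁿ B and V₂ n = A*ⁿ C*
  obtain ⟨V₁, hV₁⟩ : ∃ V₁ : ℕ → (Δ →ₗᵢ[ℂ] H), ∀ n e, V₁ n e = (A ^ n) (B e) :=
    ⟨fun n => LinearMap.isometryOfInner (((A ^ n).comp B : Δ →L[ℂ] H) : Δ →ₗ[ℂ] H)
      (fun v w => by simpa [Module.End.pow_apply] using L1 n n v w), fun n e => rfl⟩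
  obtain ⟨V₂, hV₂⟩ : ∃ V₂ : ℕ → (Δs →ₗᵢ[ℂ] H),
      ∀ n ε, V₂ n ε = ((adjoint A) ^ n) (adjoint C ε) :=
    ⟨fun n => LinearMap.isometryOfInner
      (((((adjoint A) ^ n).comp (adjoint C)) : Δs →L[ℂ] H) : Δs →ₗ[ℂ] H)
      (fun v w => by simpa [Module.End.pow_apply] using L2 n n v w), fun n ε => rfl⟩
  have hV₁orth : OrthogonalFamily ℂ (fun _ : ℕ => Δ) V₁ := by
    intro i j hij v w
    rw [hV₁, hV₁]
    simpa [if_neg hij] using L1 i j v w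
  have hV₂orth : OrthogonalFamily ℂ (fun _ : ℕ => Δs) V₂ := by
    intro i j hij v w
    rw [hV₂, hV₂]
    simpa [if_neg hij] using L2 i j v w
  obtain ⟨Φ₁, hΦ₁⟩ : ∃ Φ₁ : lp (fun _ : ℕ => Δ) 2 →ₗᵢ[ℂ] H,
      ∀ f, HasSum (fun n => V₁ n (f n)) (Φ₁ f) :=
    ⟨hV₁orth.linearIsometry, hV₁orth.hasSum_linearIsometry⟩
  obtain ⟨Φ₂, hΦ₂⟩ : ∃ Φ₂ : lp (fun _ : ℕ => Δs) 2 →ₗᵢ[ℂ] H,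
      ∀ f, HasSum (fun n => V₂ n (f n)) (Φ₂ f) :=
    ⟨hV₂orth.linearIsometry, hV₂orth.hasSum_linearIsometry⟩
  have hΦ₁single : ∀ e : Δ, Φ₁ (lp.single 2 0 e) = B e := by
    intro e
    refine ((hΦ₁ _).unique (hasSum_single 0 ?_)).trans ?_
    · intro n hn
      have h0 : (lp.single 2 0 e : lp (fun _ : ℕ => Δ) 2) n = 0 :=
        lp.single_apply_ne (E := fun _ : ℕ => Δ) 2 0 e hn
      rw [h0, map_zero]
    · have h0 : (lp.single 2 0 e : lp (fun _ : ℕ => Δ) 2) 0 = e :=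
        lp.single_apply_self (E := fun _ : ℕ => Δ) 2 0 e
      rw [h0, hV₁, hpow0]
  have hΦ₂single : ∀ ε : Δs, Φ₂ (lp.single 2 0 ε) = adjoint C ε := by
    intro ε
    refine ((hΦ₂ _).unique (hasSum_single 0 ?_)).trans ?_
    · intro n hn
      have h0 : (lp.single 2 0 ε : lp (fun _ : ℕ => Δs) 2) n = 0 :=
        lp.single_apply_ne (E := fun _ : ℕ => Δs) 2 0 ε hn
      rw [h0, map_zero]
    · have h0 : (lp.single 2 0 ε : lp (fun _ : ℕ => Δs) 2) 0 = ε :=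
        lp.single_apply_self (E := fun _ : ℕ => Δs) 2 0 ε
      rw [h0, hV₂, hpow0]
  -- cross orthogonality of the ranges of Φ₁ and Φ₂
  have hkey : ∀ (x : lp (fun _ : ℕ => Δ) 2) (m : ℕ) (w : Δs), ⟪V₂ m w, Φ₁ x⟫ = 0 := by
    intro x m w
    have h := (hΦ₁ x).mapL (innerSL ℂ (V₂ m w))
    have h0 : (fun n => (innerSL ℂ (V₂ m w)) (V₁ n (x n))) = fun _ => (0 : ℂ) := by
      funext n
      simp only [innerSL_apply_apply]
      rw [hV₂, hV₁, inner_eq_zero_symm]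
      exact L3 n m (x n) w
    rw [h0] at h
    simpa using h.unique hasSum_zero
  have hcross : ∀ (x : lp (fun _ : ℕ => Δ) 2) (y : lp (fun _ : ℕ => Δs) 2),
      ⟪Φ₁ x, Φ₂ y⟫ = 0 := by
    intro x y
    have h := (hΦ₂ y).mapL (innerSL ℂ (Φ₁ x))
    have h0 : (fun m => (innerSL ℂ (Φ₁ x)) (V₂ m (y m))) = fun _ => (0 : ℂ) := by
      funext m
      simp only [innerSL_apply_apply]
      rw [inner_eq_zero_symm]
      exact hkey x m (y m)
    rw [h0] at h
    simpa using h.unique hasSum_zero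
  -- the combined isometry Φ
  obtain ⟨Φ, hΦ⟩ : ∃ Φ : H10 Δ Δs →ₗᵢ[ℂ] H,
      ∀ p : H10 Δ Δs, Φ p = Φ₁ ((WithLp.equiv 2 _ p).1) + Φ₂ ((WithLp.equiv 2 _ p).2) := by
    set F : H10 Δ Δs →ₗ[ℂ] H :=
      (Φ₁.toLinearMap ∘ₗ LinearMap.fst ℂ _ _ + Φ₂.toLinearMap ∘ₗ LinearMap.snd ℂ _ _) ∘ₗ
        (WithLp.linearEquiv 2 ℂ _).toLinearMap with hF
    have hFapp : ∀ p : H10 Δ Δs,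
        F p = Φ₁ ((WithLp.equiv 2 _ p).1) + Φ₂ ((WithLp.equiv 2 _ p).2) := fun p => rfl
    refine ⟨F.isometryOfInner ?_, fun p => rfl⟩
    intro p q
    rw [hFapp, hFapp, inner_add_left, inner_add_right, inner_add_right,
      Φ₁.inner_map_map, Φ₂.inner_map_map, hcross,
      (inner_eq_zero_symm.mp (hcross _ _)), WithLp.prod_inner_apply]
    simp only [add_zero, zero_add]
    rfl
  -- action of `A`, `A*`, `C` on `V₁ n`, `V₂ n`
  have hAV₁ : ∀ (n : ℕ) (v : Δ), A (V₁ n v) = V₁ (n + 1) v := by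
    intro n v; rw [hV₁, hV₁, hpow1]
  have hAdV₂ : ∀ (n : ℕ) (w : Δs), adjoint A (V₂ n w) = V₂ (n + 1) w := by
    intro n w; rw [hV₂, hV₂, hpow1]
  have hAdV₁0 : ∀ v : Δ, adjoint A (V₁ 0 v) = 0 := by
    intro v; rw [hV₁, hpow0]; exact hAB0 v
  have hAdV₁succ : ∀ (n : ℕ) (v : Δ), adjoint A (V₁ (n + 1) v) = V₁ n v := by
    intro n v
    rw [← hAV₁ n v]
    exact hAdA _ (by rw [hV₁]; exact hCpow n v)
  have hAV₂0 : ∀ w : Δs, A (V₂ 0 w) = 0 := by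
    intro w; rw [hV₂, hpow0]; exact hACd0 w
  have hAV₂succ : ∀ (n : ℕ) (w : Δs), A (V₂ (n + 1) w) = V₂ n w := by
    intro n w
    rw [← hAdV₂ n w]
    exact hAAd _ (by rw [hV₂]; exact hBdpow n w)
  have hCV₁ : ∀ (n : ℕ) (v : Δ), C (V₁ n v) = 0 := by
    intro n v; rw [hV₁]; exact hCpow n v
  have hCV₂0 : ∀ w : Δs, C (V₂ 0 w) = w := by
    intro w; rw [hV₂, hpow0]; exact hCCd w
  have hCV₂succ : ∀ (n : ℕ) (w : Δs), C (V₂ (n + 1) w) = 0 := by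
    intro n w; rw [hV₂]; exact hCAd n w
  -- shifting summation lemmas
  have hshiftH : ∀ (f g : ℕ → H) (s : H), g 0 = 0 → (∀ n, g (n + 1) = f n) →
      HasSum f s → HasSum g s := by
    intro f g s h0 hfg hs
    have h5 : HasSum (fun n => g (n + 1)) s := by
      rw [show (fun n => g (n + 1)) = f from funext hfg]
      exact hs
    have h6 := (hasSum_nat_add_iff (f := g) 1).mp h5
    simpa [h0] using h6
  have hshiftH' : ∀ (f g : ℕ → H) (s : H), f 0 = 0 → (∀ n, f (n + 1) = g n) →
      HasSum f s → HasSum g s := by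
    intro f g s h0 hfg hs
    have h5 : HasSum (fun n => f (n + 1)) s := by
      apply (hasSum_nat_add_iff (f := f) 1).mpr
      simpa [h0] using hs
    rw [show (fun n => f (n + 1)) = g from funext hfg] at h5
    exact h5
  -- the intertwining identities
  have hAΦ : ∀ p : H10 Δ Δs, A (Φ p) = Φ (A10 p) := by
    intro p
    obtain ⟨h0, h1, h2⟩ := hA10 p
    rw [hΦ p, hΦ (A10 p), map_add]
    have e1 : A (Φ₁ ((WithLp.equiv 2 _ p).1)) = Φ₁ ((WithLp.equiv 2 _ (A10 p)).1) := by
      refine (HasSum.unique ?_ (hΦ₁ _))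
      refine hshiftH (fun n => A (V₁ n ((WithLp.equiv 2 _ p).1 n)))
        (fun n => V₁ n ((WithLp.equiv 2 _ (A10 p)).1 n)) _ ?_ ?_
        ((hΦ₁ ((WithLp.equiv 2 _ p).1)).mapL A)
      · beta_reduce
        rw [h0, map_zero]
      · intro n
        beta_reduce
        rw [h1 n, hAV₁]
    have e2 : A (Φ₂ ((WithLp.equiv 2 _ p).2)) = Φ₂ ((WithLp.equiv 2 _ (A10 p)).2) := by
      refine (HasSum.unique ?_ (hΦ₂ _))
      refine hshiftH' (fun n => A (V₂ n ((WithLp.equiv 2 _ p).2 n)))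
        (fun n => V₂ n ((WithLp.equiv 2 _ (A10 p)).2 n)) _ ?_ ?_
        ((hΦ₂ ((WithLp.equiv 2 _ p).2)).mapL A)
      · beta_reduce
        rw [hAV₂0]
      · intro n
        beta_reduce
        rw [hAV₂succ, h2 n]
    rw [e1, e2]
  have hAdΦ : ∀ p : H10 Δ Δs, adjoint A (Φ p) =
      Φ ((WithLp.equiv 2 _).symm (bsl ((WithLp.equiv 2 _ p).1),
        fsl ((WithLp.equiv 2 _ p).2))) := by
    intro p
    rw [hΦ p, hΦ _, map_add, Equiv.apply_symm_apply]
    have e1 : adjoint A (Φ₁ ((WithLp.equiv 2 _ p).1)) =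
        Φ₁ (bsl ((WithLp.equiv 2 _ p).1)) := by
      refine (HasSum.unique ?_ (hΦ₁ _))
      refine hshiftH' (fun n => adjoint A (V₁ n ((WithLp.equiv 2 _ p).1 n)))
        (fun n => V₁ n (bsl ((WithLp.equiv 2 _ p).1) n)) _ ?_ ?_
        ((hΦ₁ ((WithLp.equiv 2 _ p).1)).mapL (adjoint A))
      · beta_reduce
        rw [hAdV₁0]
      · intro n
        beta_reduce
        rw [hAdV₁succ, bsl_apply]
    have e2 : adjoint A (Φ₂ ((WithLp.equiv 2 _ p).2)) =
        Φ₂ (fsl ((WithLp.equiv 2 _ p).2)) := by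
      refine (HasSum.unique ?_ (hΦ₂ _))
      refine hshiftH (fun n => adjoint A (V₂ n ((WithLp.equiv 2 _ p).2 n)))
        (fun n => V₂ n (fsl ((WithLp.equiv 2 _ p).2) n)) _ ?_ ?_
        ((hΦ₂ ((WithLp.equiv 2 _ p).2)).mapL (adjoint A))
      · beta_reduce
        rw [fsl_zero, map_zero]
      · intro n
        beta_reduce
        rw [fsl_succ, hAdV₂]
    rw [e1, e2]
  have hCΦ : ∀ p : H10 Δ Δs, C (Φ p) = ((WithLp.equiv 2 _ p).2) 0 := by
    intro p
    rw [hΦ p, map_add]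
    have c1 : C (Φ₁ ((WithLp.equiv 2 _ p).1)) = 0 := by
      have hs := (hΦ₁ ((WithLp.equiv 2 _ p).1)).mapL C
      rw [show (fun n => C (V₁ n ((WithLp.equiv 2 _ p).1 n))) = fun _ => (0 : Δs) from
        funext fun n => hCV₁ n _] at hs
      exact hs.unique hasSum_zero
    have c2 : C (Φ₂ ((WithLp.equiv 2 _ p).2)) = ((WithLp.equiv 2 _ p).2) 0 := by
      have hs := (hΦ₂ ((WithLp.equiv 2 _ p).2)).mapL C
      have h1 : HasSum (fun n => C (V₂ n ((WithLp.equiv 2 _ p).2 n)))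
          (C (V₂ 0 ((WithLp.equiv 2 _ p).2 0))) := by
        refine hasSum_single 0 ?_
        intro n hn
        obtain ⟨k, rfl⟩ := Nat.exists_eq_succ_of_ne_zero hn
        exact hCV₂succ k _
      rw [hs.unique h1, hCV₂0]
    rw [c1, c2, zero_add]
  -- surjectivity of Φ via simplicity
  have hΦsurj : Function.Surjective ⇑Φ := by
    have hclosed : IsClosed ((LinearMap.range Φ.toLinearMap : Submodule ℂ H) : Set H) := by
      have h := Φ.isometry.isClosedEmbedding.isClosed_range
      convert h using 1
      exact LinearMap.coe_range _
    have hB : ∀ e : Δ, B e ∈ LinearMap.range Φ.toLinearMap := by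
      intro e
      refine ⟨(WithLp.equiv 2 _).symm (lp.single 2 0 e, 0), ?_⟩
      show Φ _ = B e
      rw [hΦ, Equiv.apply_symm_apply]
      show Φ₁ (lp.single 2 0 e) + Φ₂ 0 = B e
      rw [hΦ₁single, map_zero, add_zero]
    have hCm : ∀ ε : Δs, adjoint C ε ∈ LinearMap.range Φ.toLinearMap := by
      intro ε
      refine ⟨(WithLp.equiv 2 _).symm (0, lp.single 2 0 ε), ?_⟩
      show Φ _ = adjoint C ε
      rw [hΦ, Equiv.apply_symm_apply]
      show Φ₁ 0 + Φ₂ (lp.single 2 0 ε) = adjoint C ε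
      rw [hΦ₂single, map_zero, zero_add]
    have hAm : ∀ v ∈ LinearMap.range Φ.toLinearMap, A v ∈ LinearMap.range Φ.toLinearMap := by
      rintro v ⟨p, rfl⟩
      exact ⟨A10 p, (hAΦ p).symm⟩
    have hAdm : ∀ v ∈ LinearMap.range Φ.toLinearMap,
        adjoint A v ∈ LinearMap.range Φ.toLinearMap := by
      rintro v ⟨p, rfl⟩
      exact ⟨(WithLp.equiv 2 _).symm (bsl ((WithLp.equiv 2 _ p).1),
        fsl ((WithLp.equiv 2 _ p).2)), (hAdΦ p).symm⟩
    have htop := hsimple _ hclosed hB hCm hAm hAdm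
    intro v
    have hv : v ∈ LinearMap.range Φ.toLinearMap := by rw [htop]; trivial
    exact hv
  set Φe := LinearIsometryEquiv.ofSurjective Φ hΦsurj with hΦedef
  have hΦeapp : ∀ p, Φe p = Φ p := fun p =>
    congrFun (LinearIsometryEquiv.coe_ofSurjective Φ hΦsurj) p
  refine ⟨Φe.symm, ?_, ?_, ?_⟩
  · intro v
    have h := hAΦ (Φe.symm v)
    rw [← hΦeapp (Φe.symm v), ← hΦeapp (A10 (Φe.symm v)), Φe.apply_symm_apply] at h
    rw [h, Φe.symm_apply_apply]
  · intro e
    have h : B e = Φe (B10 e) := by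
      rw [hΦeapp, hΦ, hB10]
      show B e = Φ₁ (lp.single 2 0 e) + Φ₂ 0
      rw [hΦ₁single, map_zero, add_zero]
    rw [h, Φe.symm_apply_apply]
  · intro v
    rw [hC10 (Φe.symm v)]
    have h := hCΦ (Φe.symm v)
    rw [← hΦeapp (Φe.symm v), Φe.apply_symm_apply] at h
    exact h
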